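/- Let G be a finite group, N a normal subgroup of G, and p, q distinct primes. If the quotient G/N contains a subgroup which is a Schmidt (p,q)-group, then G contains a subgroup which is a Schmidt (p,q)-group. (The Schmidt graph function is Q-closed: Γ_Sch(G/N) ⊆ Γ_Sch(G).) -/

import Mathlib

/-- The join of a set of normal subgroups is normal. -/
theorem sSup_normal {G : Type*} [Group G] (S : Set (Subgroup G)) (hS : ∀ N ∈ S, N.Normal) :
    (sSup S).Normal := by
  constructor
  intro n hn g
  rw [sSup_eq_iSup'] at hn ⊢
  refine Subgroup.iSup_induction (C := fun x => g * x * g⁻¹ ∈ ⨆ N : S, (N : Subgroup G))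
    _ hn ?_ ?_ ?_
  · intro N x hx
    exact Subgroup.mem_iSup_of_mem N ((hS N N.2).conj_mem x hx g)
  · simpa using Subgroup.one_mem _
  · intro x y hx hy
    have h : g * (x * y) * g⁻¹ = (g * x * g⁻¹) * (g * y * g⁻¹) := by group
    rw [h]; exact Subgroup.mul_mem _ hx hy

/-- The `p'`-core `O_{p'}(G)`: the largest normal subgroup of `G` of order coprime to `p`,
realized as the join of all normal subgroups of order coprime to `p`. -/
def pPrimeCore (p : ℕ) (G : Type*) [Group G] : Subgroup G :=
  sSup {N : Subgroup G | N.Normal ∧ Nat.Coprime (Nat.card N) p}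

instance pPrimeCore_normal (p : ℕ) (G : Type*) [Group G] : (pPrimeCore p G).Normal :=
  sSup_normal _ fun _ hN => hN.1

/-- The `p`-core `O_p(G)`: the largest normal `p`-subgroup of `G`,
realized as the join of all normal `p`-subgroups. -/
def pCore (p : ℕ) (G : Type*) [Group G] : Subgroup G :=
  sSup {N : Subgroup G | N.Normal ∧ IsPGroup p N}

instance pCore_normal (p : ℕ) (G : Type*) [Group G] : (pCore p G).Normal :=
  sSup_normal _ fun _ hN => hN.1

/-- `O_{p',p}(G)`: the preimage in `G` of `O_p(G / O_{p'}(G))`. -/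
def OpPrimeP (p : ℕ) (G : Type*) [Group G] : Subgroup G :=
  (pCore p (G ⧸ pPrimeCore p G)).comap (QuotientGroup.mk' (pPrimeCore p G))

/-- A Schmidt group: a non-nilpotent group all of whose proper subgroups are nilpotent. -/
def IsSchmidt (G : Type*) [Group G] : Prop :=
  ¬ Group.IsNilpotent G ∧ ∀ H : Subgroup G, H ≠ ⊤ → Group.IsNilpotent H

/-- A Schmidt `(p,q)`-group: a Schmidt group whose order is divisible by exactly the
primes `p` and `q` and whose Sylow `p`-subgroup is normal. -/
def IsSchmidtPQ (p q : ℕ) (G : Type*) [Group G] : Prop :=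
  IsSchmidt G ∧ (Nat.card G).primeFactors = {p, q} ∧ ∃ P : Sylow p G, (P : Subgroup G).Normal

section SchmidtHelpers
open Subgroup

variable {p q : ℕ}

theorem IsSchmidtPQ.of_mulEquiv {A B : Type*} [Group A] [Group B] (e : A ≃* B)
    (h : IsSchmidtPQ p q A) : IsSchmidtPQ p q B := by
  obtain ⟨⟨hnil, hsub⟩, hcard, P, hP⟩ := h
  refine ⟨⟨fun hB => hnil (nilpotent_of_mulEquiv e.symm), fun Hs hHs => ?_⟩, ?_, ?_⟩
  · have h1 : Hs.comap e.toMonoidHom ≠ ⊤ := by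
      intro htop
      apply hHs
      have h2 := congrArg (Subgroup.map (e.toMonoidHom)) htop
      rwa [Subgroup.map_comap_eq_self_of_surjective e.surjective, ← MonoidHom.range_eq_map,
        MonoidHom.range_eq_top.mpr e.surjective] at h2
    haveI := hsub _ h1
    have e2 : ↥(Hs.comap e.toMonoidHom) ≃* ↥Hs :=
      (e.subgroupMap _).trans (MulEquiv.subgroupCongr
        (Subgroup.map_comap_eq_self_of_surjective e.surjective Hs))
    exact nilpotent_of_mulEquiv e2
  · rwa [← Nat.card_congr e.toEquiv]
  · refine ⟨⟨(P : Subgroup A).map e.toMonoidHom, P.2.map e.toMonoidHom, fun {Q} hQ hle => ?_⟩,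
      hP.map e.toMonoidHom e.surjective⟩
    have h3 : (P : Subgroup A) ≤ Q.comap e.toMonoidHom := by
      rw [← Subgroup.comap_map_eq_self_of_injective (f := e.toMonoidHom) e.injective (P : Subgroup A)]
      exact Subgroup.comap_mono hle
    have h4 := P.3 (hQ.comap_of_injective e.toMonoidHom e.injective) h3
    rw [← h4, Subgroup.map_comap_eq_self_of_surjective e.surjective]

theorem exists_minimal_mem {Γ : Type*} [Group Γ] [Finite Γ] (𝒮 : Set (Subgroup Γ))
    (hne : 𝒮.Nonempty) : ∃ S ∈ 𝒮, ∀ T ∈ 𝒮, ¬ T < S := by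
  obtain ⟨S₀, hS₀⟩ := hne
  have key : ∀ n (S : Subgroup Γ), S ∈ 𝒮 → Nat.card S ≤ n → ∃ S' ∈ 𝒮, ∀ T ∈ 𝒮, ¬ T < S' := by
    intro n
    induction n with
    | zero =>
      intro S hS hle
      have := Nat.card_pos (α := ↥S)
      omega
    | succ n ih =>
      intro S hS hle
      by_cases hmin : ∀ T ∈ 𝒮, ¬ T < S
      · exact ⟨S, hS, hmin⟩
      · push_neg at hmin
        obtain ⟨T, hT, hTS⟩ := hmin
        have hlt : Nat.card T < Nat.card S := by
          by_contra hc
          exact hTS.ne (Subgroup.eq_of_le_of_card_ge hTS.le (by omega))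
        exact ih T hT (by omega)
  exact key (Nat.card S₀) S₀ hS₀ le_rfl

theorem exists_schmidtPQ_of_action {Γ : Type*} [Group Γ] [Finite Γ]
    (hp : p.Prime) (hq : q.Prime) (hpq : p ≠ q)
    (P₁ : Subgroup Γ) (hP₁ : IsPGroup p P₁) {y : Γ} (hy : y ∈ Subgroup.normalizer (P₁ : Set Γ))
    (hyq : ∃ n : ℕ, y ^ q ^ n = 1)
    {x : Γ} (hx : x ∈ P₁) (hact : y * x * y⁻¹ ≠ x) :
    ∃ S : Subgroup Γ, IsSchmidtPQ p q S := by
  haveI hpF : Fact p.Prime := ⟨hp⟩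
  haveI hqF : Fact q.Prime := ⟨hq⟩
  obtain ⟨n₀, hn₀⟩ := hyq
  set X : Subgroup Γ := P₁ ⊔ Subgroup.zpowers y with hXdef
  have hP₁X : P₁ ≤ X := le_sup_left
  have hyX : y ∈ X := Subgroup.mem_sup_right (Subgroup.mem_zpowers y)
  have hXnorm : X ≤ Subgroup.normalizer (P₁ : Set Γ) := sup_le Subgroup.le_normalizer (Subgroup.zpowers_le.mpr hy)
  have hconj : ∀ (k : ℤ) (t : Γ), t ∈ P₁ → y ^ k * t * (y ^ k)⁻¹ ∈ P₁ := fun k t ht =>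
    (Subgroup.mem_normalizer_iff.mp (zpow_mem hy k) t).mp ht
  -- decomposition X = P₁ * ⟨y⟩
  let D : Subgroup Γ :=
    { carrier := {s | ∃ t ∈ P₁, ∃ k : ℤ, s = t * y ^ k}
      one_mem' := ⟨1, one_mem _, 0, by simp⟩
      mul_mem' := by
        rintro a b ⟨t, ht, k, rfl⟩ ⟨u, hu, m, rfl⟩
        exact ⟨t * (y ^ k * u * (y ^ k)⁻¹), mul_mem ht (hconj k u hu), k + m, by group⟩
      inv_mem' := by
        rintro a ⟨t, ht, k, rfl⟩
        exact ⟨y ^ (-k) * t⁻¹ * (y ^ (-k))⁻¹, hconj _ _ (inv_mem ht), -k, by group⟩ }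
  have hXD : X ≤ D := sup_le (fun t ht => ⟨t, ht, 0, by simp⟩)
    (Subgroup.zpowers_le.mpr ⟨1, one_mem _, 1, by simp⟩)
  -- q-power of any element of X falls into P₁
  have hpow : ∀ s ∈ X, s ^ q ^ n₀ ∈ P₁ := by
    intro s hs
    obtain ⟨t, ht, k, rfl⟩ := hXD hs
    have key : ∀ m : ℕ, ∃ t' ∈ P₁, (t * y ^ k) ^ m = t' * y ^ (k * (m : ℤ)) := by
      intro m
      induction m with
      | zero => exact ⟨1, one_mem _, by simp⟩
      | succ m ih =>
        obtain ⟨t', ht', hm⟩ := ih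
        refine ⟨t' * (y ^ (k * (m : ℤ)) * t * (y ^ (k * (m : ℤ)))⁻¹),
          mul_mem ht' (hconj _ _ ht), ?_⟩
        rw [pow_succ, hm]
        have hz : (((m : ℕ) + 1 : ℕ) : ℤ) = (m : ℤ) + 1 := by push_cast; ring
        rw [hz]
        group
    obtain ⟨t', ht', hm⟩ := key (q ^ n₀)
    rw [hm]
    have h1 : y ^ (k * ((q ^ n₀ : ℕ) : ℤ)) = 1 := by
      rw [mul_comm, zpow_mul, zpow_natCast, hn₀, one_zpow]
    rw [h1, mul_one]
    exact ht'
  -- normality of P₁ ⊓ S in S for S ≤ normalizer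
  have hnormal : ∀ S : Subgroup Γ, S ≤ Subgroup.normalizer (P₁ : Set Γ) → (P₁.subgroupOf S).Normal := by
    intro S hS
    constructor
    intro n hn g
    rw [Subgroup.mem_subgroupOf] at hn ⊢
    have := (Subgroup.mem_normalizer_iff.mp (hS g.2) ↑n).mp hn
    simpa using this
  -- the quotient by P₁ ⊓ S is a q-group for S ≤ X
  have hquot : ∀ S : Subgroup Γ, S ≤ X → ∀ (_ : (P₁.subgroupOf S).Normal),
      IsPGroup q (↥S ⧸ P₁.subgroupOf S) := by
    intro S hSX hno
    intro g
    refine ⟨n₀, ?_⟩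
    haveI := hno
    induction g using QuotientGroup.induction_on with
    | H s =>
      rw [← QuotientGroup.mk_pow, QuotientGroup.eq_one_iff, Subgroup.mem_subgroupOf]
      simpa using hpow ↑s (hSX s.2)
  -- X is not nilpotent
  have hXnn : ¬ Group.IsNilpotent ↥X := by
    intro hnil
    have h4 := ((isNilpotent_of_finite_tfae (G := ↥X)).out 0 3).mp hnil
    obtain ⟨Sp⟩ : Nonempty (Sylow p ↥X) := inferInstance
    obtain ⟨Sq⟩ : Nonempty (Sylow q ↥X) := inferInstance
    have hSp := h4 p hpF Sp
    have hSq := h4 q hqF Sq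
    set x' : ↥X := ⟨x, hP₁X hx⟩
    set y' : ↥X := ⟨y, hyX⟩
    -- x' is a p-element
    have hx'mem : x' ∈ (Sp : Subgroup ↥X) := by
      obtain ⟨k, hk⟩ := hP₁ ⟨x, hx⟩
      have hxk : x' ^ p ^ k = 1 := by
        ext
        simpa using congrArg Subtype.val hk
      have hzp : IsPGroup p (Subgroup.zpowers x') := by
        obtain ⟨j, _, hj⟩ := (Nat.dvd_prime_pow hp).mp (orderOf_dvd_of_pow_eq_one hxk)
        exact IsPGroup.of_card (n := j) (by rw [Nat.card_zpowers, hj])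
      obtain ⟨Q', hQ'⟩ := hzp.exists_le_sylow
      haveI := Sylow.unique_of_normal Sp hSp
      rw [Subsingleton.elim Q' Sp] at hQ'
      exact hQ' (Subgroup.mem_zpowers x')
    have hy'mem : y' ∈ (Sq : Subgroup ↥X) := by
      have hyk : y' ^ q ^ n₀ = 1 := by
        ext
        simpa using hn₀
      have hzq : IsPGroup q (Subgroup.zpowers y') := by
        obtain ⟨j, _, hj⟩ := (Nat.dvd_prime_pow hq).mp (orderOf_dvd_of_pow_eq_one hyk)
        exact IsPGroup.of_card (n := j) (by rw [Nat.card_zpowers, hj])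
      obtain ⟨Q', hQ'⟩ := hzq.exists_le_sylow
      haveI := Sylow.unique_of_normal Sq hSq
      rw [Subsingleton.elim Q' Sq] at hQ'
      exact hQ' (Subgroup.mem_zpowers y')
    have hdisj := IsPGroup.disjoint_of_ne p q hpq _ _ Sp.2 Sq.2
    set c : ↥X := y' * x' * y'⁻¹ * x'⁻¹ with hc
    have hcSp : c ∈ (Sp : Subgroup ↥X) :=
      mul_mem (hSp.conj_mem x' hx'mem y') (inv_mem hx'mem)
    have hcSq : c ∈ (Sq : Subgroup ↥X) := by
      have h5 : c = y' * (x' * y'⁻¹ * x'⁻¹) := by rw [hc]; group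
      rw [h5]
      exact mul_mem hy'mem (by simpa using hSq.conj_mem y'⁻¹ (inv_mem hy'mem) x')
    have hc1 : c = 1 := Subgroup.disjoint_def.mp hdisj hcSp hcSq
    apply hact
    have h6 : y' * x' * y'⁻¹ = x' := by
      have := mul_inv_eq_one.mp hc1
      exact this
    simpa using congrArg Subtype.val h6
  -- take a minimal non-nilpotent subgroup of X
  obtain ⟨S, ⟨hSX, hSnn⟩, hmin⟩ := exists_minimal_mem
    {S : Subgroup Γ | S ≤ X ∧ ¬ Group.IsNilpotent ↥S} ⟨X, le_refl X, hXnn⟩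
  refine ⟨S, ⟨hSnn, ?_⟩, ?_, ?_⟩
  -- proper subgroups are nilpotent
  · intro Hs hHs
    set M := Hs.map S.subtype with hM
    have hMS : M ≤ S := Subgroup.map_subtype_le Hs
    have hMlt : M < S := lt_of_le_of_ne hMS (fun heq => hHs (by
      have h7 := congrArg (Subgroup.comap S.subtype) heq
      rwa [Subgroup.comap_map_eq_self_of_injective S.subtype_injective,
        Subgroup.comap_subtype, Subgroup.subgroupOf_self] at h7))
    have hMnil : Group.IsNilpotent ↥M := by
      by_contra hMnn
      exact hmin M ⟨hMS.trans hSX, hMnn⟩ hMlt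
    haveI := hMnil
    exact nilpotent_of_mulEquiv (Subgroup.equivMapOfInjective Hs S.subtype
      S.subtype_injective).symm
  -- prime factors
  all_goals {
    have hTnorm : (P₁.subgroupOf S).Normal := hnormal S (hSX.trans hXnorm)
    haveI := hTnorm
    have hTp : IsPGroup p (P₁.subgroupOf S) := hP₁.comap_of_injective S.subtype
      S.subtype_injective
    have hTq : IsPGroup q (↥S ⧸ P₁.subgroupOf S) := hquot S hSX hTnorm
    obtain ⟨a, ha⟩ := IsPGroup.iff_card.mp hTp
    obtain ⟨b, hb⟩ := IsPGroup.iff_card.mp hTq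
    have hcard : Nat.card ↥S = q ^ b * p ^ a := by
      rw [Subgroup.card_eq_card_quotient_mul_card_subgroup (P₁.subgroupOf S), ha, hb]
    have ha0 : a ≠ 0 := by
      rintro rfl
      apply hSnn
      have hq' : IsPGroup q ↥S := by
        apply IsPGroup.of_card (p := q) (n := b)
        rw [hcard]; simp
      exact hq'.isNilpotent
    have hb0 : b ≠ 0 := by
      rintro rfl
      apply hSnn
      have hp' : IsPGroup p ↥S := by
        apply IsPGroup.of_card (p := p) (n := a)
        rw [hcard]; simp
      exact hp'.isNilpotent
    first
    | -- prime factors goal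
      (rw [hcard, Nat.primeFactors_mul (pow_ne_zero _ hq.pos.ne') (pow_ne_zero _ hp.pos.ne'),
        Nat.primeFactors_pow _ hb0, Nat.primeFactors_pow _ ha0, hq.primeFactors,
        hp.primeFactors]
       ext r
       simp [or_comm])
    | -- Sylow goal
      (refine ⟨⟨P₁.subgroupOf S, hTp, fun {Q} hQ hle => ?_⟩, hTnorm⟩
       refine le_antisymm ?_ hle
       intro u hu
       obtain ⟨k, hk⟩ := hQ ⟨u, hu⟩
       have hup : u ^ p ^ k = 1 := by
         simpa using congrArg Subtype.val hk
       have h8 : ((u : ↥S ⧸ P₁.subgroupOf S)) ^ p ^ k = 1 := by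
         rw [← QuotientGroup.mk_pow, hup]
         rfl
       obtain ⟨l, hl⟩ := hTq ((u : ↥S ⧸ P₁.subgroupOf S))
       have hdvd1 : orderOf ((u : ↥S ⧸ P₁.subgroupOf S)) ∣ p ^ k :=
         orderOf_dvd_of_pow_eq_one h8
       have hdvd2 : orderOf ((u : ↥S ⧸ P₁.subgroupOf S)) ∣ q ^ l :=
         orderOf_dvd_of_pow_eq_one hl
       have hcop : Nat.Coprime (p ^ k) (q ^ l) :=
         Nat.Coprime.pow _ _ ((Nat.coprime_primes hp hq).mpr hpq)
       have ho1 : orderOf ((u : ↥S ⧸ P₁.subgroupOf S)) = 1 :=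
         Nat.eq_one_of_dvd_coprimes hcop hdvd1 hdvd2
       have h9 : ((u : ↥S ⧸ P₁.subgroupOf S)) = 1 := orderOf_eq_one_iff.mp ho1
       rwa [QuotientGroup.eq_one_iff] at h9)
  }

theorem eq_one_of_dvd_prime_pow {p k c : ℕ} (hp : p.Prime) (hd : k ∣ p ^ c) (hnd : ¬ p ∣ k) :
    k = 1 := by
  obtain ⟨j, hj, rfl⟩ := (Nat.dvd_prime_pow hp).mp hd
  cases j with
  | zero => rfl
  | succ j => exact absurd (dvd_pow_self p (Nat.succ_ne_zero j)) hnd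

end SchmidtHelpers

/-- The Schmidt graph function is `Q`-closed: if `G/N` contains a Schmidt `(p,q)`-subgroup
then so does `G`. -/
theorem schmidt_Q_closed {G : Type*} [Group G] [Finite G] (N : Subgroup G) [N.Normal]
    {p q : ℕ} (hp : p.Prime) (hq : q.Prime) (hpq : p ≠ q)
    (h : ∃ H : Subgroup (G ⧸ N), IsSchmidtPQ p q H) :
    ∃ H : Subgroup G, IsSchmidtPQ p q H := by
  obtain ⟨H, hH⟩ := h
  haveI hpF : Fact p.Prime := ⟨hp⟩
  haveI hqF : Fact q.Prime := ⟨hq⟩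
  obtain ⟨⟨hHnn, hHsub⟩, hHcard, P, hPnorm⟩ := hH
  set π := QuotientGroup.mk' N with hπdef
  have hπ : Function.Surjective π := QuotientGroup.mk'_surjective N
  set K : Subgroup G := H.comap π with hKdef
  set ρ : ↥K →* ↥H := π.subgroupComap H with hρdef
  have hρ : Function.Surjective ρ := by
    rintro ⟨h0, hh0⟩
    obtain ⟨g, rfl⟩ := hπ h0
    exact ⟨⟨g, hh0⟩, rfl⟩
  haveI : (P : Subgroup ↥H).Normal := hPnorm
  set R : Subgroup ↥K := (P : Subgroup ↥H).comap ρ with hRdef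
  haveI hRnorm : R.Normal := hPnorm.comap ρ
  obtain ⟨P₁⟩ : Nonempty (Sylow p ↥R) := inferInstance
  set Pm : Subgroup ↥K := Subgroup.map R.subtype (P₁ : Subgroup ↥R) with hPmdef
  have hPmp : IsPGroup p Pm := P₁.2.map R.subtype
  have hPmR : Pm ≤ R := Subgroup.map_subtype_le _
  have hfrattini : Subgroup.normalizer (Pm : Set ↥K) ⊔ R = ⊤ := Sylow.normalizer_sup_eq_top P₁
  set Ng : Subgroup ↥K := Subgroup.normalizer (Pm : Set ↥K) with hNgdef
  obtain ⟨Q₁⟩ : Nonempty (Sylow q ↥Ng) := inferInstance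
  set Qm : Subgroup ↥K := Subgroup.map Ng.subtype (Q₁ : Subgroup ↥Ng) with hQmdef
  have hQmq : IsPGroup q Qm := Q₁.2.map Ng.subtype
  have hQmNg : Qm ≤ Ng := Subgroup.map_subtype_le _
  by_cases hcase : ∃ y ∈ Qm, ∃ x ∈ Pm, y * x * y⁻¹ ≠ x
  · obtain ⟨y, hy, x, hx, hne⟩ := hcase
    have hyq : ∃ n : ℕ, y ^ q ^ n = 1 := by
      obtain ⟨n, hn⟩ := hQmq ⟨y, hy⟩
      exact ⟨n, by simpa using congrArg Subtype.val hn⟩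
    obtain ⟨S, hS⟩ := exists_schmidtPQ_of_action hp hq hpq Pm hPmp (hQmNg hy) hyq hx hne
    exact ⟨S.map K.subtype,
      hS.of_mulEquiv (Subgroup.equivMapOfInjective S K.subtype K.subtype_injective)⟩
  · exfalso
    push_neg at hcase
    apply hHnn
    have hcomm : ∀ b : ↥K, b ∈ Qm → ∀ a : ↥K, a ∈ Pm → b * a = a * b := by
      intro b hb a ha
      have h1 := hcase b hb a ha
      rw [mul_inv_eq_iff_eq_mul] at h1
      exact h1
    -- (i) the image of Pm is P
    have hle1 : Pm.map ρ ≤ (P : Subgroup ↥H) := Subgroup.map_le_iff_le_comap.mpr hPmR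
    have hPmidx : ¬ p ∣ Pm.index := by
      have hmul := Subgroup.relIndex_mul_index hPmR
      have hrel : Pm.relIndex R = (P₁ : Subgroup ↥R).index := by
        rw [Subgroup.relIndex, Subgroup.subgroupOf, hPmdef,
          Subgroup.comap_map_eq_self_of_injective R.subtype_injective]
      have hRidx : R.index = (P : Subgroup ↥H).index :=
        Subgroup.index_comap_of_surjective _ hρ
      rw [← hmul, hrel, hRidx]
      intro hdvd
      rcases (Nat.Prime.dvd_mul hp).mp hdvd with h1 | h1
      · exact P₁.not_dvd_index h1
      · exact P.not_dvd_index h1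
    have hmapPmidx : ¬ p ∣ (Pm.map ρ).index := fun hd =>
      hPmidx (hd.trans (Pm.index_map_dvd hρ))
    have hmapPm : Pm.map ρ = (P : Subgroup ↥H) := by
      refine le_antisymm hle1 (Subgroup.relIndex_eq_one.mp ?_)
      have hmul2 := Subgroup.relIndex_mul_index hle1
      have hrelnp : ¬ p ∣ (Pm.map ρ).relIndex ↑P := fun hd =>
        hmapPmidx (hmul2 ▸ hd.mul_right _)
      obtain ⟨c, hc⟩ := IsPGroup.iff_card.mp P.2
      have hdvdc : (Pm.map ρ).relIndex ↑P ∣ p ^ c :=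
        hc ▸ Subgroup.index_dvd_card ((Pm.map ρ).subgroupOf ↑P)
      exact eq_one_of_dvd_prime_pow hp hdvdc hrelnp
    -- (ii) the quotient of H by P is a q-group
    have hHq : ∃ d, Nat.card (↥H ⧸ (P : Subgroup ↥H)) = q ^ d := by
      have h0 : (P : Subgroup ↥H).index ≠ 0 := Subgroup.index_ne_zero_of_finite
      have hnd : ¬ p ∣ (P : Subgroup ↥H).index := P.not_dvd_index
      have huniq : ∀ {d : ℕ}, d.Prime → d ∣ (P : Subgroup ↥H).index → d = q := by
        intro d hd hdvd
        have hd2 : d ∣ Nat.card ↥H := hdvd.trans (Subgroup.index_dvd_card _)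
        have hmem : d ∈ (Nat.card ↥H).primeFactors :=
          Nat.mem_primeFactors.mpr ⟨hd, hd2, Nat.card_pos.ne'⟩
        rw [hHcard] at hmem
        rcases Finset.mem_insert.mp hmem with h1 | h1
        · exact absurd (h1 ▸ hdvd) hnd
        · exact Finset.mem_singleton.mp h1
      exact ⟨_, Nat.eq_prime_pow_of_unique_prime_dvd h0 huniq⟩
    -- the composite to the quotient
    set τ : ↥K →* ↥H ⧸ (P : Subgroup ↥H) :=
      (QuotientGroup.mk' (P : Subgroup ↥H)).comp ρ with hτdef
    have hτsurj : Function.Surjective τ :=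
      (QuotientGroup.mk'_surjective _).comp hρ
    have hτR : Subgroup.map τ R = ⊥ := by
      rw [eq_bot_iff]
      rintro _ ⟨r, hr, rfl⟩
      have : ρ r ∈ (P : Subgroup ↥H) := hr
      simpa [hτdef, QuotientGroup.eq_one_iff] using this
    have hτNg : Subgroup.map τ Ng = ⊤ := by
      have h2 : Subgroup.map τ (Ng ⊔ R) = ⊤ := by
        rw [hfrattini, ← MonoidHom.range_eq_map, MonoidHom.range_eq_top.mpr hτsurj]
      rwa [Subgroup.map_sup, hτR, sup_bot_eq] at h2
    set σ : ↥Ng →* ↥H ⧸ (P : Subgroup ↥H) := τ.comp Ng.subtype with hσdef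
    have hσrange : σ.range = ⊤ := by
      rw [hσdef, MonoidHom.range_comp, Subgroup.range_subtype, hτNg]
    have hσsurj : Function.Surjective σ := MonoidHom.range_eq_top.mp hσrange
    have hτQm : Subgroup.map τ Qm = ⊤ := by
      have hmm : Subgroup.map τ Qm = Subgroup.map σ (Q₁ : Subgroup ↥Ng) := by
        rw [hQmdef, Subgroup.map_map]
      rw [hmm, ← Subgroup.index_eq_one]
      obtain ⟨d, hd⟩ := hHq
      have hdvd : (Subgroup.map σ (Q₁ : Subgroup ↥Ng)).index ∣ q ^ d :=
        hd ▸ Subgroup.index_dvd_card _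
      have hnd : ¬ q ∣ (Subgroup.map σ (Q₁ : Subgroup ↥Ng)).index := fun hdq =>
        Q₁.not_dvd_index (hdq.trans (Subgroup.index_map_dvd _ hσsurj))
      exact eq_one_of_dvd_prime_pow hq hdvd hnd
    -- P ⊔ map ρ Qm = ⊤
    have hsup : (P : Subgroup ↥H) ⊔ Subgroup.map ρ Qm = ⊤ := by
      have h3 : Subgroup.map (QuotientGroup.mk' (P : Subgroup ↥H)) (Subgroup.map ρ Qm) = ⊤ := by
        rw [Subgroup.map_map, ← hτdef, hτQm]
      have h4 := congrArg (Subgroup.comap (QuotientGroup.mk' (P : Subgroup ↥H))) h3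
      rwa [Subgroup.comap_map_eq, QuotientGroup.ker_mk', Subgroup.comap_top, sup_comm] at h4
    -- W is nilpotent and surjects onto H
    set W : Subgroup ↥K := Pm ⊔ Qm with hWdef
    let φ : ↥Pm × ↥Qm →* ↥K :=
      { toFun := fun z => (z.1 : ↥K) * (z.2 : ↥K)
        map_one' := by simp
        map_mul' := by
          rintro ⟨a, b⟩ ⟨c, d⟩
          have hcb : (b : ↥K) * (c : ↥K) = (c : ↥K) * (b : ↥K) := hcomm b b.2 c c.2
          show ((a * c : ↥Pm) : ↥K) * ((b * d : ↥Qm) : ↥K) =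
            ((a : ↥K) * b) * ((c : ↥K) * d)
          push_cast
          have h5 : (c : ↥K) * ((b : ↥K) * d) = (b : ↥K) * ((c : ↥K) * d) := by
            rw [← mul_assoc, ← hcb, mul_assoc]
          rw [mul_assoc, mul_assoc, h5] }
    have hφ : ∀ z : ↥Pm × ↥Qm, φ z = (z.1 : ↥K) * (z.2 : ↥K) := fun _ => rfl
    have hrange : φ.range = W := by
      apply le_antisymm
      · rintro _ ⟨⟨a, b⟩, rfl⟩
        rw [hφ]
        exact mul_mem (Subgroup.mem_sup_left a.2) (Subgroup.mem_sup_right b.2)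
      · refine sup_le ?_ ?_
        · intro a ha
          exact ⟨(⟨a, ha⟩, 1), by rw [hφ]; simp⟩
        · intro b hb
          exact ⟨(1, ⟨b, hb⟩), by rw [hφ]; simp⟩
    haveI : Group.IsNilpotent ↥Pm := hPmp.isNilpotent
    haveI : Group.IsNilpotent ↥Qm := hQmq.isNilpotent
    have hWnil : Group.IsNilpotent ↥W := by
      have h2 : Group.IsNilpotent ↥φ.range :=
        nilpotent_of_surjective φ.rangeRestrict φ.rangeRestrict_surjective
      rwa [hrange] at h2
    -- conclude
    have hmapW : Subgroup.map ρ W = ⊤ := by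
      rw [hWdef, Subgroup.map_sup, hmapPm, hsup]
    set ψ : ↥W →* ↥H := ρ.comp W.subtype with hψdef
    have hψsurj : Function.Surjective ψ := by
      apply MonoidHom.range_eq_top.mp
      rw [hψdef, MonoidHom.range_comp, Subgroup.range_subtype, hmapW]
    haveI := hWnil
    exact nilpotent_of_surjective ψ hψsurj
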